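/- For every n ≥ 1, every a : ℕ, and every b < 2^n: if T^[n](b) is even then T^[(n+1)](2^(n+1)*a + b) = 3^(m(b,n)) * a + T^[n](b)/2, and if T^[n](b) is odd then T^[(n+1)](2^(n+1)*a + b) = 3^(m(b,n)+1) * a + (3*T^[n](b)+1)/2. -/
import Mathlib


def T (N : ℕ) : ℕ := if N % 2 = 0 then N / 2 else (3 * N + 1) / 2

def m (b n : ℕ) : ℕ := ((Finset.range n).filter (fun k => Odd (T^[k] b))).card

lemma m_succ (b n : ℕ) : m b (n + 1) = m b n + (if Odd (T^[n] b) then 1 else 0) := by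
  unfold m
  rw [Finset.range_add_one, Finset.filter_insert]
  by_cases h : Odd (T^[n] b)
  · rw [if_pos h, if_pos h, Finset.card_insert_of_notMem (by simp)]
  · rw [if_neg h, if_neg h]; rfl

lemma m_succ_shift (n b : ℕ) : m b (n + 1) = m (T b) n + (if Odd b then 1 else 0) := by
  induction n with
  | zero =>
    simp [m, Finset.filter_singleton, Finset.range_one]
    by_cases h : Odd b <;> simp [h]
  | succ n ih =>
    rw [m_succ b (n + 1), ih, m_succ (T b) n, Function.iterate_succ_apply]
    omega

lemma key (n : ℕ) : ∀ a b : ℕ, T^[n] (2 ^ n * a + b) = 3 ^ m b n * a + T^[n] b := by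
  induction n with
  | zero => intro a b; simp [m]
  | succ n ih =>
    intro a b
    rw [Function.iterate_succ_apply, Function.iterate_succ_apply (f := T) (n := n) (x := b)]
    obtain ⟨c, hc⟩ : ∃ c, 2 ^ n * a = c := ⟨_, rfl⟩
    have hsplit : 2 ^ (n + 1) * a + b = 2 * c + b := by rw [← hc]; ring
    rcases Nat.even_or_odd b with he | ho
    · have hb2 : b % 2 = 0 := Nat.even_iff.mp he
      have hT : T (2 ^ (n + 1) * a + b) = 2 ^ n * a + T b := by
        rw [hsplit]; simp only [T]
        rw [if_pos (by omega : (2 * c + b) % 2 = 0), if_pos hb2, hc]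
        omega
      rw [hT, ih a (T b), m_succ_shift]
      simp [Nat.not_odd_iff_even.mpr he]
    · have hb2 : b % 2 = 1 := Nat.odd_iff.mp ho
      have hT : T (2 ^ (n + 1) * a + b) = 2 ^ n * (3 * a) + T b := by
        rw [hsplit]; simp only [T]
        rw [if_neg (by omega : ¬ (2 * c + b) % 2 = 0), if_neg (by omega : ¬ b % 2 = 0)]
        rw [show 2 ^ n * (3 * a) = 3 * c by rw [← hc]; ring]
        omega
      rw [hT, ih (3 * a) (T b), m_succ_shift]
      simp [ho, pow_succ]
      ring

theorem stmt16 : ∀ n ≥ 1, ∀ a : ℕ, ∀ b < 2 ^ n,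
    (Even (T^[n] b) → T^[n + 1] (2 ^ (n + 1) * a + b) = 3 ^ m b n * a + T^[n] b / 2) ∧
    (Odd (T^[n] b) → T^[n + 1] (2 ^ (n + 1) * a + b) = 3 ^ (m b n + 1) * a + (3 * T^[n] b + 1) / 2) := by
  intro n _ a b _
  have hk : T^[n] (2 ^ (n + 1) * a + b) = 2 * (3 ^ m b n * a) + T^[n] b := by
    rw [show (2:ℕ) ^ (n + 1) * a = 2 ^ n * (2 * a) by ring, key n (2 * a) b]
    ring
  rw [Function.iterate_succ_apply', hk]
  obtain ⟨q, hq⟩ : ∃ q, 3 ^ m b n * a = q := ⟨_, rfl⟩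
  obtain ⟨x, hx⟩ : ∃ x, T^[n] b = x := ⟨_, rfl⟩
  rw [hq, hx]
  constructor
  · intro he
    have h0 : x % 2 = 0 := Nat.even_iff.mp he
    simp only [T]
    rw [if_pos (by omega : (2 * q + x) % 2 = 0)]
    omega
  · intro ho
    have h1 : x % 2 = 1 := Nat.odd_iff.mp ho
    simp only [T]
    rw [if_neg (by omega : ¬ (2 * q + x) % 2 = 0)]
    rw [show (3:ℕ) ^ (m b n + 1) * a = 3 * q by rw [← hq]; ring]
    omega
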